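/- (Approximation guarantee of TRW′) For any distribution ρ on spanning trees of G with κ(G,ρ) = min_e ρ_e > 0 and any non-negative weights and potentials with Φ(θ) > 0, the estimate Φ̂_ρ(θ) = √(L_ρ(θ)·U_ρ(θ)) satisfies max(Φ(θ)/Φ̂_ρ(θ), Φ̂_ρ(θ)/Φ(θ)) ≤ 1/√κ(G,ρ). -/

import Mathlib

open scoped Classical

lemma lse_mono {α : Type*} [Fintype α] [Nonempty α] (S T : α → ℝ) (h : ∀ x, S x ≤ T x) :
    Real.log (∑ x : α, Real.exp (S x)) ≤ Real.log (∑ x : α, Real.exp (T x)) :=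
  Real.log_le_log (Finset.sum_pos (fun x _ => Real.exp_pos _) Finset.univ_nonempty)
    (Finset.sum_le_sum fun x _ => Real.exp_le_exp.2 (h x))

lemma lse_scale {α : Type*} [Fintype α] [Nonempty α] (t : ℝ) (ht : 1 ≤ t) (S : α → ℝ) :
    Real.log (∑ x : α, Real.exp (t * S x)) ≤ t * Real.log (∑ x : α, Real.exp (S x)) := by
  set A : ℝ := ∑ x : α, Real.exp (S x) with hA
  have hApos : 0 < A := Finset.sum_pos (fun x _ => Real.exp_pos _) Finset.univ_nonempty
  have key : ∑ x : α, Real.exp (t * S x) ≤ A ^ t := by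
    have : ∀ x : α, Real.exp (t * S x) ≤ A ^ (t - 1) * Real.exp (S x) := by
      intro x
      have h1 : Real.exp (t * S x) = Real.exp (S x) ^ (t - 1) * Real.exp (S x) := by
        rw [← Real.exp_mul, ← Real.rpow_one (Real.exp (S x)), ← Real.exp_mul,
          ← Real.exp_add]
        ring_nf
      rw [h1]
      have h2 : Real.exp (S x) ^ (t - 1) ≤ A ^ (t - 1) :=
        Real.rpow_le_rpow (Real.exp_pos _).le
          (Finset.single_le_sum (fun y _ => (Real.exp_pos (S y)).le) (Finset.mem_univ x))
          (by linarith)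
      exact mul_le_mul_of_nonneg_right h2 (Real.exp_pos _).le
    calc ∑ x : α, Real.exp (t * S x) ≤ ∑ x : α, A ^ (t - 1) * Real.exp (S x) :=
          Finset.sum_le_sum fun x _ => this x
      _ = A ^ (t - 1) * A := by rw [← Finset.mul_sum]
      _ = A ^ t := by
          rw [← Real.rpow_add_one hApos.ne' (t - 1)]
          norm_num
  calc Real.log (∑ x : α, Real.exp (t * S x)) ≤ Real.log (A ^ t) :=
        Real.log_le_log (Finset.sum_pos (fun x _ => Real.exp_pos _) Finset.univ_nonempty) key
    _ = t * Real.log A := Real.log_rpow hApos t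

lemma lse_jensen {α ι : Type*} [Fintype α] [Nonempty α] [Fintype ι]
    (w : ι → ℝ) (hw : ∀ i, 0 ≤ w i) (hw1 : ∑ i, w i = 1) (S : ι → α → ℝ) :
    Real.log (∑ x : α, Real.exp (∑ i, w i * S i x)) ≤
      ∑ i, w i * Real.log (∑ x : α, Real.exp (S i x)) := by
  set Φ : ι → ℝ := fun i => Real.log (∑ x : α, Real.exp (S i x)) with hΦdef
  have hZ : ∀ i, (0:ℝ) < ∑ x : α, Real.exp (S i x) := fun i =>
    Finset.sum_pos (fun x _ => Real.exp_pos _) Finset.univ_nonempty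
  have key : ∑ x : α, Real.exp (∑ i, w i * S i x) ≤ Real.exp (∑ i, w i * Φ i) := by
    rw [← div_le_one (Real.exp_pos _), Finset.sum_div]
    have step : ∀ x : α, Real.exp (∑ i, w i * S i x) / Real.exp (∑ i, w i * Φ i)
        ≤ ∑ i, w i * Real.exp (S i x - Φ i) := by
      intro x
      rw [← Real.exp_sub, ← Finset.sum_sub_distrib]
      have he : (∑ i, (w i * S i x - w i * Φ i)) = ∑ i, w i * (S i x - Φ i) := by
        refine Finset.sum_congr rfl fun i _ => by ring
      rw [he]
      have hprod : Real.exp (∑ i, w i * (S i x - Φ i))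
          = ∏ i, Real.exp (S i x - Φ i) ^ (w i) := by
        rw [Real.exp_sum]
        refine Finset.prod_congr rfl fun i _ => ?_
        rw [← Real.exp_mul, mul_comm]
      rw [hprod]
      exact Real.geom_mean_le_arith_mean_weighted Finset.univ w
        (fun i => Real.exp (S i x - Φ i)) (fun i _ => hw i) hw1
        (fun i _ => (Real.exp_pos _).le)
    calc ∑ x : α, Real.exp (∑ i, w i * S i x) / Real.exp (∑ i, w i * Φ i)
        ≤ ∑ x : α, ∑ i, w i * Real.exp (S i x - Φ i) :=
          Finset.sum_le_sum fun x _ => step x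
      _ = ∑ i, w i * ∑ x : α, Real.exp (S i x - Φ i) := by
          rw [Finset.sum_comm]
          exact Finset.sum_congr rfl fun i _ => (Finset.mul_sum _ _ _).symm
      _ = ∑ i, w i := by
          refine Finset.sum_congr rfl fun i _ => ?_
          have : ∑ x : α, Real.exp (S i x - Φ i)
              = (∑ x : α, Real.exp (S i x)) / Real.exp (Φ i) := by
            rw [Finset.sum_div]
            exact Finset.sum_congr rfl fun x _ => by rw [Real.exp_sub]
          rw [this, hΦdef, Real.exp_log (hZ i), div_self (hZ i).ne', mul_one]
      _ = 1 := hw1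
  calc Real.log (∑ x : α, Real.exp (∑ i, w i * S i x))
      ≤ Real.log (Real.exp (∑ i, w i * Φ i)) :=
        Real.log_le_log (Finset.sum_pos (fun x _ => Real.exp_pos _) Finset.univ_nonempty) key
    _ = ∑ i, w i * Φ i := Real.log_exp _


/-- The log-partition function of a pairwise graphical model on the graph `G`. -/
noncomputable def logPartitionFn {V X : Type*} [Fintype V] [DecidableEq V] [Fintype X]
    (G : SimpleGraph V) [DecidableRel G.Adj]
    (ψ : Sym2 V → (V → X) → ℝ) (θ : Sym2 V → ℝ) : ℝ :=
  Real.log (∑ x : V → X, Real.exp (∑ e ∈ G.edgeFinset, θ e * ψ e x))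

/-- Approximation guarantee of TRW′: for any distribution `ρ` on spanning trees of `G`
with `κ(G,ρ) = min_e ρ_e > 0` and non-negative weights and potentials with `Φ(θ) > 0`,
the estimate `Φ̂_ρ(θ) = √(L_ρ(θ)·U_ρ(θ))` satisfies
`max(Φ(θ)/Φ̂_ρ(θ), Φ̂_ρ(θ)/Φ(θ)) ≤ 1/√κ(G,ρ)`. -/
theorem trw_approximation_guarantee
    {V X : Type*} [Fintype V] [DecidableEq V] [Fintype X] [Nonempty X]
    (G : SimpleGraph V) [DecidableRel G.Adj] (hG : G.Connected)
    (hE : G.edgeFinset.Nonempty)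
    (ψ : Sym2 V → (V → X) → ℝ) (hψ : ∀ e x, 0 ≤ ψ e x)
    (hpair : ∀ e ∈ G.edgeSet, ∀ x y : V → X, (∀ v ∈ e, x v = y v) → ψ e x = ψ e y)
    (θ : Sym2 V → ℝ) (hθ : ∀ e, 0 ≤ θ e)
    (hΦ : 0 < logPartitionFn G ψ θ)
    {ι : Type*} [Fintype ι] (Tr : ι → SimpleGraph V)
    (hsub : ∀ i, Tr i ≤ G) (htree : ∀ i, (Tr i).IsTree)
    (ρ : ι → ℝ) (hρ0 : ∀ i, 0 ≤ ρ i) (hρ1 : ∑ i, ρ i = 1)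
    (κ : ℝ)
    (hκ : κ = G.edgeFinset.inf' hE
      (fun e => ∑ i, ρ i * (if e ∈ (Tr i).edgeSet then (1 : ℝ) else 0)))
    (hκpos : 0 < κ)
    (L U phiHat : ℝ)
    (hL : L = ∑ i, ρ i * logPartitionFn G ψ (fun e =>
        if e ∈ (Tr i).edgeSet then θ e else 0))
    (hU : U = ∑ i, ρ i * logPartitionFn G ψ (fun e =>
        if e ∈ (Tr i).edgeSet then
          θ e / (∑ j, ρ j * (if e ∈ (Tr j).edgeSet then (1 : ℝ) else 0))
        else 0))
    (hhat : phiHat = Real.sqrt (L * U)) :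
    max (logPartitionFn G ψ θ / phiHat) (phiHat / logPartitionFn G ψ θ)
      ≤ 1 / Real.sqrt κ := by
  have hκle : ∀ e ∈ G.edgeFinset,
      κ ≤ ∑ j, ρ j * (if e ∈ (Tr j).edgeSet then (1 : ℝ) else 0) := by
    intro e he
    rw [hκ]
    exact Finset.inf'_le _ he
  have hrepos : ∀ e ∈ G.edgeFinset,
      0 < ∑ j, ρ j * (if e ∈ (Tr j).edgeSet then (1 : ℝ) else 0) :=
    fun e he => lt_of_lt_of_le hκpos (hκle e he)
  have hκ1 : κ ≤ 1 := by
    obtain ⟨e0, he0⟩ := hE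
    refine (hκle e0 he0).trans ?_
    rw [← hρ1]
    refine Finset.sum_le_sum fun j _ => ?_
    have := hρ0 j
    split_ifs <;> nlinarith
  have h1κ : 1 ≤ 1 / κ := by rw [le_div_iff₀ hκpos]; linarith
  set P := logPartitionFn G ψ θ with hP
  -- (1) L ≤ P
  have hLP : L ≤ P := by
    rw [hL, hP]
    calc ∑ i, ρ i * logPartitionFn G ψ (fun e => if e ∈ (Tr i).edgeSet then θ e else 0)
        ≤ ∑ i, ρ i * logPartitionFn G ψ θ := by
          refine Finset.sum_le_sum fun i _ => mul_le_mul_of_nonneg_left ?_ (hρ0 i)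
          simp only [logPartitionFn]
          refine lse_mono _ _ fun x => Finset.sum_le_sum fun e _ => ?_
          refine mul_le_mul_of_nonneg_right ?_ (hψ e x)
          split_ifs with h
          · exact le_refl _
          · exact hθ e
      _ = logPartitionFn G ψ θ := by rw [← Finset.sum_mul, hρ1, one_mul]
  -- (2) P ≤ U  (Jensen)
  have hPU : P ≤ U := by
    rw [hU, hP]
    have key := lse_jensen ρ hρ0 hρ1 (fun i (x : V → X) =>
      ∑ e ∈ G.edgeFinset,
        (if e ∈ (Tr i).edgeSet then
          θ e / (∑ j, ρ j * (if e ∈ (Tr j).edgeSet then (1 : ℝ) else 0)) else 0) * ψ e x)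
    have hexp : ∀ x : V → X, (∑ e ∈ G.edgeFinset, θ e * ψ e x)
        = ∑ i, ρ i * (∑ e ∈ G.edgeFinset,
            (if e ∈ (Tr i).edgeSet then
              θ e / (∑ j, ρ j * (if e ∈ (Tr j).edgeSet then (1 : ℝ) else 0)) else 0)
              * ψ e x) := by
      intro x
      calc ∑ e ∈ G.edgeFinset, θ e * ψ e x
          = ∑ e ∈ G.edgeFinset, ∑ i, ρ i *
              ((if e ∈ (Tr i).edgeSet then
                θ e / (∑ j, ρ j * (if e ∈ (Tr j).edgeSet then (1 : ℝ) else 0)) else 0)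
                * ψ e x) := by
            refine Finset.sum_congr rfl fun e he => ?_
            have h1 : ∀ i, ρ i *
                ((if e ∈ (Tr i).edgeSet then
                  θ e / (∑ j, ρ j * (if e ∈ (Tr j).edgeSet then (1 : ℝ) else 0)) else 0)
                  * ψ e x)
                = (ρ i * (if e ∈ (Tr i).edgeSet then (1 : ℝ) else 0)) *
                  (θ e / (∑ j, ρ j * (if e ∈ (Tr j).edgeSet then (1 : ℝ) else 0)) * ψ e x) := by
              intro i
              split_ifs <;> ring
            rw [Finset.sum_congr rfl fun i _ => h1 i, ← Finset.sum_mul]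
            have hne := (hrepos e he).ne'
            have hne2 : (∑ j, if e ∈ (Tr j).edgeSet then ρ j else 0) ≠ 0 := by
              simpa [mul_ite, mul_one, mul_zero] using hne
            field_simp
      _ = ∑ i, ∑ e ∈ G.edgeFinset, ρ i *
              ((if e ∈ (Tr i).edgeSet then
                θ e / (∑ j, ρ j * (if e ∈ (Tr j).edgeSet then (1 : ℝ) else 0)) else 0)
                * ψ e x) := Finset.sum_comm
      _ = ∑ i, ρ i * (∑ e ∈ G.edgeFinset,
              (if e ∈ (Tr i).edgeSet then
                θ e / (∑ j, ρ j * (if e ∈ (Tr j).edgeSet then (1 : ℝ) else 0)) else 0)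
                * ψ e x) :=
            Finset.sum_congr rfl fun i _ => (Finset.mul_sum _ _ _).symm
    simp only [logPartitionFn]
    have e2 : (∑ x : V → X, Real.exp (∑ e ∈ G.edgeFinset, θ e * ψ e x))
        = ∑ x : V → X, Real.exp (∑ i, ρ i *
            (∑ e ∈ G.edgeFinset,
              (if e ∈ (Tr i).edgeSet then
                θ e / (∑ j, ρ j * (if e ∈ (Tr j).edgeSet then (1 : ℝ) else 0)) else 0)
                * ψ e x)) :=
      Finset.sum_congr rfl fun x _ => by rw [hexp x]
    rw [e2]
    exact key
  -- (3) U ≤ (1/κ) * L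
  have hperi : ∀ i, logPartitionFn G ψ (fun e =>
      if e ∈ (Tr i).edgeSet then
        θ e / (∑ j, ρ j * (if e ∈ (Tr j).edgeSet then (1 : ℝ) else 0)) else 0)
      ≤ (1/κ) * logPartitionFn G ψ (fun e => if e ∈ (Tr i).edgeSet then θ e else 0) := by
    intro i
    simp only [logPartitionFn]
    have step1 : ∀ x : V → X,
        (∑ e ∈ G.edgeFinset,
          (if e ∈ (Tr i).edgeSet then
            θ e / (∑ j, ρ j * (if e ∈ (Tr j).edgeSet then (1 : ℝ) else 0)) else 0) * ψ e x)
        = (1/κ) * ∑ e ∈ G.edgeFinset,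
            (κ * (if e ∈ (Tr i).edgeSet then
              θ e / (∑ j, ρ j * (if e ∈ (Tr j).edgeSet then (1 : ℝ) else 0)) else 0)) * ψ e x := by
      intro x
      rw [Finset.mul_sum]
      refine Finset.sum_congr rfl fun e _ => ?_
      rw [← mul_assoc, ← mul_assoc, one_div, inv_mul_cancel₀ hκpos.ne', one_mul]
    have e1 : (∑ x : V → X, Real.exp (∑ e ∈ G.edgeFinset,
          (if e ∈ (Tr i).edgeSet then
            θ e / (∑ j, ρ j * (if e ∈ (Tr j).edgeSet then (1 : ℝ) else 0)) else 0) * ψ e x))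
        = ∑ x : V → X, Real.exp ((1/κ) * ∑ e ∈ G.edgeFinset,
            (κ * (if e ∈ (Tr i).edgeSet then
              θ e / (∑ j, ρ j * (if e ∈ (Tr j).edgeSet then (1 : ℝ) else 0)) else 0)) * ψ e x) :=
      Finset.sum_congr rfl fun x _ => by rw [step1 x]
    rw [e1]
    calc Real.log (∑ x : V → X, Real.exp ((1/κ) * ∑ e ∈ G.edgeFinset,
            (κ * (if e ∈ (Tr i).edgeSet then
              θ e / (∑ j, ρ j * (if e ∈ (Tr j).edgeSet then (1 : ℝ) else 0)) else 0)) * ψ e x))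
        ≤ (1/κ) * Real.log (∑ x : V → X, Real.exp (∑ e ∈ G.edgeFinset,
            (κ * (if e ∈ (Tr i).edgeSet then
              θ e / (∑ j, ρ j * (if e ∈ (Tr j).edgeSet then (1 : ℝ) else 0)) else 0)) * ψ e x)) :=
          lse_scale _ h1κ _
      _ ≤ (1/κ) * Real.log (∑ x : V → X, Real.exp (∑ e ∈ G.edgeFinset,
            (if e ∈ (Tr i).edgeSet then θ e else 0) * ψ e x)) := by
          refine mul_le_mul_of_nonneg_left ?_ (by positivity)
          refine lse_mono _ _ fun x => Finset.sum_le_sum fun e he => ?_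
          refine mul_le_mul_of_nonneg_right ?_ (hψ e x)
          split_ifs with h
          · have hd : κ / (∑ j, ρ j * (if e ∈ (Tr j).edgeSet then (1 : ℝ) else 0)) ≤ 1 :=
              (div_le_one (hrepos e he)).2 (hκle e he)
            have heq : κ * (θ e / (∑ j, ρ j * (if e ∈ (Tr j).edgeSet then (1 : ℝ) else 0)))
                = θ e * (κ / (∑ j, ρ j * (if e ∈ (Tr j).edgeSet then (1 : ℝ) else 0))) := by
              ring
            rw [heq]
            exact (mul_le_mul_of_nonneg_left hd (hθ e)).trans_eq (mul_one _)
          · simp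
  have hUL : U ≤ (1/κ) * L := by
    rw [hU, hL, Finset.mul_sum]
    refine Finset.sum_le_sum fun i _ => ?_
    calc ρ i * logPartitionFn G ψ (fun e =>
          if e ∈ (Tr i).edgeSet then
            θ e / (∑ j, ρ j * (if e ∈ (Tr j).edgeSet then (1 : ℝ) else 0)) else 0)
        ≤ ρ i * ((1/κ) * logPartitionFn G ψ (fun e => if e ∈ (Tr i).edgeSet then θ e else 0)) :=
          mul_le_mul_of_nonneg_left (hperi i) (hρ0 i)
      _ = (1/κ) * (ρ i * logPartitionFn G ψ (fun e => if e ∈ (Tr i).edgeSet then θ e else 0)) := by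
          ring
  -- numeric conclusion
  have hκU : κ * U ≤ L := by
    have h := mul_le_mul_of_nonneg_left hUL hκpos.le
    have h2 : κ * ((1/κ) * L) = L := by field_simp
    linarith [h, h2.le, h2.ge]
  have hUpos : 0 < U := lt_of_lt_of_le hΦ hPU
  have hLpos : 0 < L := lt_of_lt_of_le (mul_pos hκpos hUpos) hκU
  have hhatpos : 0 < phiHat := by
    rw [hhat]; exact Real.sqrt_pos.2 (mul_pos hLpos hUpos)
  have hκP : κ * P ≤ L := le_trans (mul_le_mul_of_nonneg_left hPU hκpos.le) hκU
  have hUP : U ≤ (1/κ) * P := hUL.trans (mul_le_mul_of_nonneg_left hLP (by positivity))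
  refine max_le ?_ ?_
  · have hnn : 0 ≤ P / phiHat := div_nonneg hΦ.le hhatpos.le
    have hsq : (P / phiHat) ^ 2 ≤ 1 / κ := by
      rw [div_pow, hhat, Real.sq_sqrt (mul_pos hLpos hUpos).le,
        div_le_div_iff₀ (mul_pos hLpos hUpos) hκpos]
      nlinarith [mul_le_mul hκP hPU hΦ.le hLpos.le]
    calc P / phiHat = Real.sqrt ((P / phiHat) ^ 2) := (Real.sqrt_sq hnn).symm
      _ ≤ Real.sqrt (1 / κ) := Real.sqrt_le_sqrt hsq
      _ = 1 / Real.sqrt κ := by rw [one_div, one_div, Real.sqrt_inv]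
  · have hnn : 0 ≤ phiHat / P := div_nonneg hhatpos.le hΦ.le
    have hsq : (phiHat / P) ^ 2 ≤ 1 / κ := by
      rw [div_pow, hhat, Real.sq_sqrt (mul_pos hLpos hUpos).le,
        div_le_div_iff₀ (pow_pos hΦ 2) hκpos]
      have h4 : L * U ≤ P * ((1/κ) * P) := mul_le_mul hLP hUP hUpos.le hΦ.le
      have h5 : κ * (P * ((1/κ) * P)) = P ^ 2 := by field_simp
      nlinarith [mul_le_mul_of_nonneg_left h4 hκpos.le]
    calc phiHat / P = Real.sqrt ((phiHat / P) ^ 2) := (Real.sqrt_sq hnn).symm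
      _ ≤ Real.sqrt (1 / κ) := Real.sqrt_le_sqrt hsq
      _ = 1 / Real.sqrt κ := by rw [one_div, one_div, Real.sqrt_inv]
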